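/- arXiv:2410.12594 — 2 statements merged into one kernel-verified Lean document; each statement's English description precedes it below -/
import Mathlib

section
/- Let G be a connected graph of treelength at most k ≥ 1 and let A ⊆ V(G) be such that the induced subgraph G[A] is connected. Then every shortest path in G between two vertices a, b ∈ A is contained in the set N^{≤3k/2}[A] of vertices at distance at most 3k/2 from A. -/
open SimpleGraph

/-- A (pair of) tree `Tr` and bags `B` forming a tree decomposition of `G`. -/
structure IsTreeDecomp {V T : Type} (G : SimpleGraph V) (Tr : SimpleGraph T)
    (B : T → Set V) : Prop where
  tree_connected : Tr.Connected
  tree_acyclic : Tr.IsAcyclic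
  bags_cover : ∀ v : V, ∃ t, v ∈ B t
  bags_subtree : ∀ v : V, (Tr.induce {t | v ∈ B t}).Connected
  edges_in_bag : ∀ u v : V, G.Adj u v → ∃ t, u ∈ B t ∧ v ∈ B t

/-- `G` has treelength at most `k`: some tree decomposition in which any two
vertices sharing a bag are at graph distance at most `k`. -/
def TreelengthLE {V : Type} (G : SimpleGraph V) (k : ℕ) : Prop :=
  ∃ (T : Type) (Tr : SimpleGraph T) (B : T → Set V),
    IsTreeDecomp G Tr B ∧ ∀ t : T, ∀ u ∈ B t, ∀ v ∈ B t, G.edist u v ≤ k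

section Aux

variable {T : Type} {Tr : SimpleGraph T}

/-- From connectedness of an induced subgraph, extract walks staying in the set. -/
lemma walk_in_set {S : Set T} (h : (Tr.induce S).Connected) {t t' : T}
    (ht : t ∈ S) (ht' : t' ∈ S) :
    ∃ w : Tr.Walk t t', ∀ z ∈ w.support, z ∈ S := by
  obtain ⟨w0⟩ := h.preconnected ⟨t, ht⟩ ⟨t', ht'⟩
  refine ⟨w0.map (SimpleGraph.Embedding.induce S).toHom, ?_⟩
  intro z hz
  replace hz : z ∈ w0.support.map (SimpleGraph.Embedding.induce (G := Tr) S).toHom := by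
    rw [← SimpleGraph.Walk.support_map]; exact hz
  rw [List.mem_map] at hz
  obtain ⟨⟨z', hz'⟩, _, rfl⟩ := hz
  exact hz'

/-- Along any walk ending in `S`, there is a first vertex of `S`. -/
lemma exists_gate {S : Set T} : ∀ {s r : T} (w : Tr.Walk s r), r ∈ S →
    ∃ t ∈ S, ∃ p1 : Tr.Walk s t, ∀ z ∈ p1.support, z ∈ S → z = t := by
  intro s r w
  induction w with
  | nil => intro hr; exact ⟨_, hr, Walk.nil, by simp⟩
  | @cons u u' v h q ih =>
    intro hr
    by_cases hu : u ∈ S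
    · exact ⟨u, hu, Walk.nil, by simp⟩
    · obtain ⟨t, htS, p1, hfree⟩ := ih hr
      refine ⟨t, htS, Walk.cons h p1, ?_⟩
      intro z hz hzS
      rw [Walk.support_cons, List.mem_cons] at hz
      rcases hz with rfl | hz
      · exact absurd hzS hu
      · exact hfree z hz hzS

/-- The gate separates `s` from all of `S` in an acyclic graph. -/
lemma gate_between (hac : Tr.IsAcyclic) {S : Set T} {s t r : T}
    (hs : s ∉ S) (ht : t ∈ S)
    (p1 : Tr.Walk s t) (hp1 : p1.IsPath) (hfree : ∀ z ∈ p1.support, z ∈ S → z = t)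
    (wS : Tr.Walk t r) (hwS : ∀ z ∈ wS.support, z ∈ S)
    (w : Tr.Walk s r) : t ∈ w.support := by
  by_contra hnt
  have hst : s ≠ t := fun h => hs (h ▸ ht)
  obtain ⟨x, hadj, q, hq⟩ := Walk.exists_eq_cons_of_ne (Ne.symm hst) p1.reverse
  have hqpath : (Walk.cons hadj q).IsPath := hq ▸ hp1.reverse
  rw [Walk.cons_isPath_iff] at hqpath
  have hbridge : Tr.IsBridge s(t, x) :=
    (SimpleGraph.isAcyclic_iff_forall_adj_isBridge.mp hac) hadj
  rw [SimpleGraph.isBridge_iff_adj_and_forall_walk_mem_edges] at hbridge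
  have hedge := hbridge (wS.append (w.reverse.append q.reverse))
  rw [Walk.edges_append, Walk.edges_append, List.mem_append, List.mem_append] at hedge
  rcases hedge with h1 | h2 | h3
  · -- x would be in S
    have hxS : x ∈ S := hwS x (Walk.snd_mem_support_of_mem_edges wS h1)
    have hxp1 : x ∈ p1.support := by
      have : x ∈ p1.reverse.support := by
        rw [hq, Walk.support_cons]
        exact List.mem_cons_of_mem _ q.start_mem_support
      simpa [Walk.support_reverse] using this
    have : x = t := hfree x hxp1 hxS
    exact hadj.ne this.symm
  · have : t ∈ w.support := by
      have := Walk.fst_mem_support_of_mem_edges _ h2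
      simpa [Walk.support_reverse] using this
    exact hnt this
  · have : t ∈ q.support := by
      have := Walk.fst_mem_support_of_mem_edges _ h3
      simpa [Walk.support_reverse] using this
    exact hqpath.2 this

variable {V : Type} {G : SimpleGraph V} {B : T → Set V}

/-- Bags containing a fixed vertex are closed under "betweenness". -/
lemma mem_bag_between (hd : IsTreeDecomp G Tr B) {v : V} {s1 s2 t : T}
    (h1 : v ∈ B s1) (h2 : v ∈ B s2)
    (hb : ∀ W : Tr.Walk s1 s2, t ∈ W.support) : v ∈ B t := by
  obtain ⟨W, hW⟩ := walk_in_set (hd.bags_subtree v) h1 h2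
  exact hW t (hb W)

/-- Any walk in `G` between vertices of bags on either side of `t` meets `B t`. -/
lemma walk_hits_bag (hd : IsTreeDecomp G Tr B) {t : T} {u v : V} (w : G.Walk u v) :
    ∀ s1 s2 : T, u ∈ B s1 → v ∈ B s2 →
    (∀ W : Tr.Walk s1 s2, t ∈ W.support) → ∃ z ∈ w.support, z ∈ B t := by
  induction w with
  | nil =>
    intro s1 s2 h1 h2 hb
    exact ⟨_, by simp, mem_bag_between hd h1 h2 hb⟩
  | @cons u u' v h q ih =>
    intro s1 s2 h1 h2 hb
    obtain ⟨t'', hu, hu'⟩ := hd.edges_in_bag u u' h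
    by_cases hB : ∀ W : Tr.Walk t'' s2, t ∈ W.support
    · obtain ⟨z, hz, hzB⟩ := ih t'' s2 hu' h2 hB
      exact ⟨z, by simp [hz], hzB⟩
    · push_neg at hB
      obtain ⟨W2, hW2⟩ := hB
      have hb1 : ∀ W1 : Tr.Walk s1 t'', t ∈ W1.support := by
        intro W1
        have := hb (W1.append W2)
        rw [Walk.mem_support_append_iff] at this
        exact this.resolve_right hW2
      exact ⟨u, by simp, mem_bag_between hd h1 hu hb1⟩

/-- The nodes whose bags meet a connected set `A` form a walk-connected set. -/
lemma chain_in_A (hd : IsTreeDecomp G Tr B) {A : Set V} {x y : ↥A}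
    (w : (G.induce A).Walk x y) :
    ∀ t t' : T, (x : V) ∈ B t → (y : V) ∈ B t' →
      ∃ W : Tr.Walk t t', ∀ z ∈ W.support, ∃ a ∈ A, a ∈ B z := by
  induction w with
  | nil =>
    intro t t' h1 h2
    obtain ⟨W, hW⟩ := walk_in_set (hd.bags_subtree _) h1 h2
    exact ⟨W, fun z hz => ⟨_, Subtype.prop _, hW z hz⟩⟩
  | @cons x x' y h q ih =>
    intro t t' h1 h2
    have hGadj : G.Adj (x : V) (x' : V) := h
    obtain ⟨t'', hxB, hx'B⟩ := hd.edges_in_bag _ _ hGadj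
    obtain ⟨W1, hW1⟩ := walk_in_set (hd.bags_subtree (x : V)) h1 hxB
    obtain ⟨W2, hW2⟩ := ih t'' t' hx'B h2
    refine ⟨W1.append W2, ?_⟩
    intro z hz
    rw [Walk.mem_support_append_iff] at hz
    rcases hz with hz | hz
    · exact ⟨_, Subtype.prop x, hW1 z hz⟩
    · exact hW2 z hz

end Aux

theorem stmt0 {V : Type} (G : SimpleGraph V) (k : ℕ) (hk : 1 ≤ k)
    (hG : G.Connected) (htl : TreelengthLE G k) (A : Set V)
    (hA : (G.induce A).Connected) (a b : V) (ha : a ∈ A) (hb : b ∈ A)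
    (p : G.Walk a b) (hp : p.length = G.dist a b) :
    ∀ x ∈ p.support, ∃ a' ∈ A, 2 * G.edist x a' ≤ 3 * k := by
  classical
  intro x hx
  obtain ⟨T, Tr, B, hd, hlen⟩ := htl
  set S : Set T := {t | ∃ a' ∈ A, a' ∈ B t} with hSdef
  have hdistbag : ∀ t : T, ∀ u ∈ B t, ∀ v ∈ B t, G.dist u v ≤ k := by
    intro t u hu v hv
    have h := hlen t u hu v hv
    have := ENat.toNat_le_toNat h (by simp)
    simpa [SimpleGraph.dist] using this
  have finish : ∀ a' ∈ A, 2 * G.dist x a' ≤ 3 * k → 2 * G.edist x a' ≤ 3 * k := by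
    intro a' ha' hdist
    have hreach : G.Reachable x a' := hG x a'
    have hEq : G.edist x a' = (G.dist x a' : ℕ∞) := by
      rw [SimpleGraph.dist, ENat.coe_toNat (edist_ne_top_iff_reachable.mpr hreach)]
    rw [hEq]
    calc 2 * (G.dist x a' : ℕ∞) = ((2 * G.dist x a' : ℕ) : ℕ∞) := by push_cast; ring
      _ ≤ ((3 * k : ℕ) : ℕ∞) := by exact_mod_cast hdist
      _ = 3 * (k : ℕ∞) := by push_cast; ring
  obtain ⟨sx, hsx⟩ := hd.bags_cover x
  by_cases hsxS : sx ∈ S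
  · obtain ⟨a', ha', ha'B⟩ := hsxS
    refine ⟨a', ha', finish a' ha' ?_⟩
    have := hdistbag sx x hsx a' ha'B
    omega
  · obtain ⟨sa, hsa⟩ := hd.bags_cover a
    obtain ⟨sb, hsb⟩ := hd.bags_cover b
    have hsaS : sa ∈ S := ⟨a, ha, hsa⟩
    have hsbS : sb ∈ S := ⟨b, hb, hsb⟩
    obtain ⟨w0⟩ := hd.tree_connected.preconnected sx sa
    obtain ⟨t, htS, p1, hfree⟩ := exists_gate w0 hsaS
    have hfree' : ∀ z ∈ p1.bypass.support, z ∈ S → z = t :=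
      fun z hz => hfree z (p1.support_bypass_subset hz)
    have hbtw : ∀ r ∈ S, ∀ W : Tr.Walk sx r, t ∈ W.support := by
      intro r hrS W
      obtain ⟨a1, ha1, ha1B⟩ := id htS
      obtain ⟨a2, ha2, ha2B⟩ := hrS
      obtain ⟨wA⟩ := hA.preconnected ⟨a1, ha1⟩ ⟨a2, ha2⟩
      obtain ⟨wS, hwS⟩ := chain_in_A hd wA t r ha1B ha2B
      exact gate_between hd.tree_acyclic hsxS htS p1.bypass p1.bypass_isPath hfree'
        wS (fun z hz => hwS z hz) W
    obtain ⟨a', ha', ha'B⟩ := htS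
    -- split the shortest path at x
    obtain ⟨u, hu_mem0, huB⟩ :=
      walk_hits_bag hd (p.takeUntil x hx).reverse sx sa hsx hsa (hbtw sa hsaS)
    obtain ⟨v, hv_mem, hvB⟩ :=
      walk_hits_bag hd (p.dropUntil x hx) sx sb hsx hsb (hbtw sb hsbS)
    have hu_mem : u ∈ (p.takeUntil x hx).support := by
      simpa [Walk.support_reverse] using hu_mem0
    -- length bookkeeping
    have hsplit0 : (p.takeUntil x hx).length + (p.dropUntil x hx).length = p.length := by
      rw [← Walk.length_append, Walk.take_spec]
    have hsplit1 : ((p.takeUntil x hx).takeUntil u hu_mem).length +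
        ((p.takeUntil x hx).dropUntil u hu_mem).length = (p.takeUntil x hx).length := by
      rw [← Walk.length_append, Walk.take_spec]
    have hsplit2 : ((p.dropUntil x hx).takeUntil v hv_mem).length +
        ((p.dropUntil x hx).dropUntil v hv_mem).length = (p.dropUntil x hx).length := by
      rw [← Walk.length_append, Walk.take_spec]
    have hdau : G.dist a u ≤ ((p.takeUntil x hx).takeUntil u hu_mem).length :=
      SimpleGraph.dist_le _
    have hdxu : G.dist x u ≤ ((p.takeUntil x hx).dropUntil u hu_mem).length := by
      rw [SimpleGraph.dist_comm]
      exact SimpleGraph.dist_le _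
    have hdxv : G.dist x v ≤ ((p.dropUntil x hx).takeUntil v hv_mem).length :=
      SimpleGraph.dist_le _
    have hdvb : G.dist v b ≤ ((p.dropUntil x hx).dropUntil v hv_mem).length :=
      SimpleGraph.dist_le _
    have hduv : G.dist u v ≤ k := hdistbag t u huB v hvB
    have htri1 : G.dist a b ≤ G.dist a u + G.dist u b := hG.dist_triangle
    have htri2 : G.dist u b ≤ G.dist u v + G.dist v b := hG.dist_triangle
    have hkey : G.dist x u + G.dist x v ≤ k := by omega
    have hdua' : G.dist u a' ≤ k := hdistbag t u huB a' ha'B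
    have hdva' : G.dist v a' ≤ k := hdistbag t v hvB a' ha'B
    refine ⟨a', ha', finish a' ha' ?_⟩
    rcases le_total (G.dist x u) (G.dist x v) with hle | hle
    · have h1 : G.dist x a' ≤ G.dist x u + G.dist u a' := hG.dist_triangle
      omega
    · have h1 : G.dist x a' ≤ G.dist x v + G.dist v a' := hG.dist_triangle
      omega
end

section
/- Let G be a graph, A ⊆ V(G) a set such that G[A] is connected, and let S ⊆ V(G) be a set of vertices with d_G(z, C) > 3k/2 for a connected component C of G[V(G) \ N^{≤3k/2}[z]], where G has treelength at most k. Then for any pair of vertices u, v ∈ C ∩ A, no shortest path in G between u and v passes through z. -/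
open SimpleGraph

section Helpers

lemma walk_of_induce {V : Type} (G : SimpleGraph V) (s : Set V) {a b : s}
    (h : (G.induce s).Reachable a b) :
    ∃ w : G.Walk a.1 b.1, ∀ x ∈ w.support, x ∈ s := by
  obtain ⟨p⟩ := h
  induction p with
  | nil => exact ⟨.nil, by simp⟩
  | @cons a c _ h p ih =>
    obtain ⟨w, hw⟩ := ih
    refine ⟨.cons (by exact h) w, ?_⟩
    intro x hx
    rcases List.mem_cons.mp hx with h1 | h2
    · subst h1; exact a.2
    · exact hw x h2


variable {V T : Type} {G : SimpleGraph V} {Tr : SimpleGraph T} {B : T → Set V}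

lemma bag_walk (D : IsTreeDecomp G Tr B) (x : V) {tx ty : T}
    (hx : x ∈ B tx) (hy : x ∈ B ty) :
    ∃ q : Tr.Walk tx ty, ∀ r ∈ q.support, x ∈ B r := by
  have h := (D.bags_subtree x).preconnected ⟨tx, hx⟩ ⟨ty, hy⟩
  exact walk_of_induce Tr {t | x ∈ B t} h

lemma tube_walk (D : IsTreeDecomp G Tr B) {x y : V} (Q : G.Walk x y) :
    ∀ {tx ty : T}, x ∈ B tx → y ∈ B ty →
      ∃ q : Tr.Walk tx ty, ∀ r ∈ q.support, ∃ w ∈ Q.support, w ∈ B r := by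
  induction Q with
  | nil =>
    intro tx ty hx hy
    obtain ⟨q, hq⟩ := bag_walk D _ hx hy
    exact ⟨q, fun r hr => ⟨_, by simp, hq r hr⟩⟩
  | @cons xx cc yy h Q ih =>
    intro tx ty hx hy
    obtain ⟨t0, h1, h2⟩ := D.edges_in_bag _ _ h
    obtain ⟨q1, hq1⟩ := bag_walk D xx hx h1
    obtain ⟨q2, hq2⟩ := ih h2 hy
    refine ⟨q1.append q2, ?_⟩
    intro r hr
    rcases (Walk.mem_support_append_iff _ _).mp hr with h1' | h2'
    · exact ⟨xx, by simp, hq1 r h1'⟩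
    · obtain ⟨w, hw, hwB⟩ := hq2 r h2'
      exact ⟨w, by simp [hw], hwB⟩

lemma first_hit {T : Type} {Tr : SimpleGraph T} (U : Set T) {a b : T} (p : Tr.Walk a b) :
    p.IsPath → b ∈ U →
      ∃ (c : T) (p1 : Tr.Walk a c), p1.IsPath ∧ c ∈ U ∧
        (∀ r ∈ p1.support, r ∈ U → r = c) ∧ (∀ r ∈ p1.support, r ∈ p.support) := by
  induction p with
  | nil => intro _ hb; exact ⟨_, .nil, by simp, hb, by simp, by simp⟩
  | @cons aa cc bb h p ih =>
    intro hp hb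
    by_cases ha : aa ∈ U
    · refine ⟨aa, .nil, by simp, ha, by simp, by simp⟩
    · obtain ⟨d, p1, h1, h2, h3, h4⟩ := ih ((Walk.cons_isPath_iff _ _).mp hp).1 hb
      refine ⟨d, .cons h p1, ?_, h2, ?_, ?_⟩
      · rw [Walk.cons_isPath_iff]
        exact ⟨h1, fun hmem => ((Walk.cons_isPath_iff _ _).mp hp).2 (h4 _ hmem)⟩
      · intro r hr hrU
        rcases List.mem_cons.mp hr with h5 | h6
        · subst h5; exact absurd hrU ha
        · exact h3 r h6 hrU
      · intro r hr
        rcases List.mem_cons.mp hr with h5 | h6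
        · subst h5; simp
        · simp [h4 r h6]

lemma walk_between {V : Type} [DecidableEq V] {G : SimpleGraph V} {a b x y : V}
    (W : G.Walk a b) (hx : x ∈ W.support) (hy : y ∈ W.support) :
    ∃ R : G.Walk x y, ∀ w ∈ R.support, w ∈ W.support := by
  refine ⟨(W.takeUntil x hx).reverse.append (W.takeUntil y hy), ?_⟩
  intro w hw
  rcases (Walk.mem_support_append_iff _ _).mp hw with h1 | h2
  · exact Walk.support_takeUntil_subset W hx (by simpa using h1)
  · exact Walk.support_takeUntil_subset W hy h2

lemma separator [DecidableEq V] (D : IsTreeDecomp G Tr B) {a b : V} (W : G.Walk a b)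
    {z : V} {tz : T} (hz : z ∈ B tz) :
    ∃ tstar : T, (∃ w ∈ W.support, w ∈ B tstar) ∧
      ∀ (x : V) (tx : T), x ∈ B tx → (∃ w ∈ W.support, w ∈ B tx) →
        ∀ R : G.Walk x z, ∃ w ∈ R.support, w ∈ B tstar := by
  classical
  set U : Set T := {t | ∃ w ∈ W.support, w ∈ B t} with hU
  obtain ⟨ta, hta⟩ := D.bags_cover a
  have htaU : ta ∈ U := ⟨a, W.start_mem_support, hta⟩
  obtain ⟨p0⟩ := D.tree_connected tz ta
  obtain ⟨tstar, p1, hp1, htstarU, honly, -⟩ :=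
    first_hit U p0.bypass (Walk.bypass_isPath p0) htaU
  refine ⟨tstar, htstarU, ?_⟩
  intro x tx hx htxU R
  by_contra hno
  push_neg at hno
  obtain ⟨q, hq⟩ := tube_walk D R hx hz
  have htq : tstar ∉ q.support := by
    intro hmem
    obtain ⟨w, hwR, hwB⟩ := hq tstar hmem
    exact hno w hwR hwB
  obtain ⟨ps, hpsW, hpsB⟩ := htstarU
  obtain ⟨wx, hwxW, hwxB⟩ := htxU
  obtain ⟨R', hR'⟩ := walk_between W hpsW hwxW
  obtain ⟨q3, hq3⟩ := tube_walk D R' hpsB hwxB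
  have hq3U : ∀ r ∈ q3.bypass.support, r ∈ U := by
    intro r hr
    obtain ⟨w, hw, hb⟩ := hq3 r (Walk.support_bypass_subset _ hr)
    exact ⟨w, hR' w hw, hb⟩
  have hq3nodup := (Walk.bypass_isPath q3).support_nodup
  have hstar_tail : tstar ∉ q3.bypass.support.tail := by
    intro hmem
    have := hq3nodup
    rw [Walk.support_eq_cons] at this
    exact (List.nodup_cons.mp this).1 hmem
  have hpath2 : (p1.append q3.bypass).IsPath := by
    rw [Walk.isPath_def, Walk.support_append]
    refine List.Nodup.append hp1.support_nodup ?_ ?_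
    · have := hq3nodup
      rw [Walk.support_eq_cons] at this
      exact (List.nodup_cons.mp this).2
    · intro r hr1 hr2
      have hrU : r ∈ U := hq3U r (List.mem_of_mem_tail hr2)
      have : r = tstar := honly r hr1 hrU
      exact hstar_tail (this ▸ hr2)
  have hEq := D.tree_acyclic.path_unique
    ⟨p1.append q3.bypass, hpath2⟩ ⟨q.reverse.bypass, Walk.bypass_isPath _⟩
  have hmem2 : tstar ∈ (p1.append q3.bypass).support :=
    (Walk.mem_support_append_iff _ _).mpr (Or.inl p1.end_mem_support)
  have : tstar ∈ q.reverse.bypass.support := by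
    have h' := congrArg (fun P : Tr.Path tz tx => P.1.support) hEq
    simp only at h'
    rwa [h'] at hmem2
  exact htq (by simpa [Walk.support_reverse, List.mem_reverse] using
    Walk.support_bypass_subset _ this)

end Helpers

theorem stmt6 {V : Type} (G : SimpleGraph V) (k : ℕ) (hG : G.Connected)
    (htl : TreelengthLE G k) (A : Set V) (hA : (G.induce A).Connected) (z : V)
    (C : (G.induce {v : V | 2 * G.edist v z ≤ 3 * k}ᶜ).ConnectedComponent)
    (u v : V) (hu : u ∈ Subtype.val '' C.supp ∩ A)
    (hv : v ∈ Subtype.val '' C.supp ∩ A) :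
    ¬ (G.edist u z + G.edist z v = G.edist u v) := by
  classical
  intro hcontra
  obtain ⟨T, Tr, B, D, hk⟩ := htl
  obtain ⟨⟨cu, hcu, rfl⟩, -⟩ := hu
  obtain ⟨⟨cv, hcv, rfl⟩, -⟩ := hv
  have hreach : (G.induce {v : V | 2 * G.edist v z ≤ 3 * k}ᶜ).Reachable cu cv := by
    apply ConnectedComponent.exact
    rw [ConnectedComponent.mem_supp_iff] at hcu hcv
    rw [hcu, hcv]
  obtain ⟨W, hW⟩ := walk_of_induce G _ hreach
  obtain ⟨tz, hz⟩ := D.bags_cover z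
  obtain ⟨tstar, ⟨ps, hpsW, hpsB⟩, hsep⟩ := separator D W hz
  obtain ⟨Q1, hQ1⟩ := (hG cu.1 z).exists_walk_length_eq_edist
  obtain ⟨Q2, hQ2⟩ := (hG z cv.1).exists_walk_length_eq_edist
  obtain ⟨tu, htu⟩ := D.bags_cover cu.1
  obtain ⟨tv, htv⟩ := D.bags_cover cv.1
  obtain ⟨w1, hw1Q, hw1B⟩ := hsep cu.1 tu htu ⟨cu.1, W.start_mem_support, htu⟩ Q1
  obtain ⟨w2, hw2Q, hw2B⟩ := hsep cv.1 tv htv ⟨cv.1, W.end_mem_support, htv⟩ Q2.reverse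
  have hw2Q' : w2 ∈ Q2.support := by
    rw [Walk.support_reverse, List.mem_reverse] at hw2Q; exact hw2Q
  -- split shortest walks
  set n1 := (Q1.takeUntil w1 hw1Q).length with hn1
  set m1 := (Q1.dropUntil w1 hw1Q).length with hm1
  set n2 := (Q2.takeUntil w2 hw2Q').length with hn2
  set m2 := (Q2.dropUntil w2 hw2Q').length with hm2
  have len1 : n1 + m1 = Q1.length := by
    have := congrArg Walk.length (Q1.take_spec hw1Q)
    rwa [Walk.length_append] at this
  have len2 : n2 + m2 = Q2.length := by
    have := congrArg Walk.length (Q2.take_spec hw2Q')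
    rwa [Walk.length_append] at this
  have e_w1z : G.edist w1 z ≤ (m1 : ℕ∞) := edist_le _
  have e_zw2 : G.edist z w2 ≤ (n2 : ℕ∞) := edist_le _
  have e_uw1 : G.edist cu.1 w1 ≤ (n1 : ℕ∞) := edist_le _
  have e_w2v : G.edist w2 cv.1 ≤ (m2 : ℕ∞) := edist_le _
  have e_w1w2 : G.edist w1 w2 ≤ (k : ℕ∞) := hk tstar w1 hw1B w2 hw2B
  have e_psw1 : G.edist ps w1 ≤ (k : ℕ∞) := hk tstar ps hpsB w1 hw1B
  have e_psw2 : G.edist ps w2 ≤ (k : ℕ∞) := hk tstar ps hpsB w2 hw2B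
  have hlen_uz : G.edist cu.1 z = ((n1 + m1 : ℕ) : ℕ∞) := by
    rw [len1]; exact hQ1.symm
  have hlen_zv : G.edist z cv.1 = ((n2 + m2 : ℕ) : ℕ∞) := by
    rw [len2]; exact hQ2.symm
  have htri : G.edist cu.1 cv.1 ≤ (n1 : ℕ∞) + k + m2 := by
    calc G.edist cu.1 cv.1 ≤ G.edist cu.1 w1 + G.edist w1 cv.1 := SimpleGraph.edist_triangle
    _ ≤ G.edist cu.1 w1 + (G.edist w1 w2 + G.edist w2 cv.1) :=
        add_le_add_right SimpleGraph.edist_triangle _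
    _ ≤ (n1 : ℕ∞) + ((k : ℕ∞) + m2) := add_le_add e_uw1 (add_le_add e_w1w2 e_w2v)
    _ = (n1 : ℕ∞) + k + m2 := by ring
  have hbig : ((n1 + m1 + (n2 + m2) : ℕ) : ℕ∞) ≤ ((n1 + k + m2 : ℕ) : ℕ∞) := by
    push_cast
    calc (n1 : ℕ∞) + m1 + ((n2 : ℕ∞) + m2) = G.edist cu.1 z + G.edist z cv.1 := by
          rw [hlen_uz, hlen_zv]; push_cast; ring
    _ = G.edist cu.1 cv.1 := hcontra
    _ ≤ (n1 : ℕ∞) + k + m2 := htri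
  have key : m1 + n2 ≤ k := by
    have h' : n1 + m1 + (n2 + m2) ≤ n1 + k + m2 := by exact_mod_cast hbig
    omega
  have hfar := hW ps hpsW
  rw [Set.mem_compl_iff, Set.mem_setOf_eq] at hfar
  apply hfar
  rcases le_or_gt (2 * m1) k with hcase | hcase
  · have h1 : G.edist ps z ≤ ((k + m1 : ℕ) : ℕ∞) := by
      push_cast
      calc G.edist ps z ≤ G.edist ps w1 + G.edist w1 z := SimpleGraph.edist_triangle
      _ ≤ (k : ℕ∞) + m1 := add_le_add e_psw1 e_w1z
    calc 2 * G.edist ps z ≤ 2 * ((k + m1 : ℕ) : ℕ∞) := by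
          exact mul_le_mul_right h1 2
    _ = ((2 * (k + m1) : ℕ) : ℕ∞) := by push_cast; ring
    _ ≤ ((3 * k : ℕ) : ℕ∞) := Nat.cast_le.mpr (by omega)
    _ = 3 * (k : ℕ∞) := by push_cast; ring
  · have h1 : G.edist ps z ≤ ((k + n2 : ℕ) : ℕ∞) := by
      push_cast
      calc G.edist ps z ≤ G.edist ps w2 + G.edist w2 z := SimpleGraph.edist_triangle
      _ ≤ (k : ℕ∞) + n2 := add_le_add e_psw2 (by rw [SimpleGraph.edist_comm]; exact e_zw2)
    calc 2 * G.edist ps z ≤ 2 * ((k + n2 : ℕ) : ℕ∞) := mul_le_mul_right h1 2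
    _ = ((2 * (k + n2) : ℕ) : ℕ∞) := by push_cast; ring
    _ ≤ ((3 * k : ℕ) : ℕ∞) := Nat.cast_le.mpr (by omega)
    _ = 3 * (k : ℕ∞) := by push_cast; ring
end
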